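/- Let G be a group, Q a set, U ⊆ Q × Q, A : U → G any map, and define B_A(q₀,q₁,q₂) := A(q₀,q₂)⁻¹ · A(q₁,q₂) · A(q₀,q₁) for (q₀,q₁,q₂) ∈ U⁽³⁾ := {(q₀,q₁,q₂) : (q_j,q_k) ∈ U for all 0 ≤ j < k ≤ 2}. Then for every N ≥ 2 and every sequence q₀,…,q_N ∈ Q such that (q₀,q_k,q_{k+1}) ∈ U⁽³⁾ for all k = 1,…,N−1, one has (∏_{k=1}^{N} A(q_{k-1},q_k)⁻¹) · A(q₀,q_N) = ∏_{k=1}^{N−1} B_A(q₀,q_k,q_{k+1})⁻¹, where ∏_{k=1}^N a_k denotes the ordered product a₁·a₂·⋯·a_N. -/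
import Mathlib

lemma aux_conn_curv {G : Type*} [Group G] {Q : Type*} (A : Q → Q → G)
    (q : ℕ → Q) :
    ∀ N : ℕ, 1 ≤ N →
    (((List.range N).map (fun k => (A (q k) (q (k + 1)))⁻¹)).prod) * A (q 0) (q N)
      = ((List.range (N - 1)).map
          (fun k => ((A (q 0) (q (k + 2)))⁻¹ * A (q (k+1)) (q (k + 2)) * A (q 0) (q (k+1)))⁻¹)).prod := by
  intro N
  induction N with
  | zero => omega
  | succ n ih =>
    intro _
    rcases Nat.eq_zero_or_pos n with h | h
    · subst h; rw [show (1:ℕ) = 0 + 1 from rfl, List.range_succ]; simp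
    · have hn : 1 ≤ n := h
      have hn1 : n - 1 + 1 = n := by omega
      have ihn := ih hn
      rw [show n + 1 - 1 = n from rfl, List.range_succ, List.map_append, List.prod_append]
      conv_rhs => rw [← hn1, List.range_succ, List.map_append, List.prod_append]
      rw [← ihn]
      simp [hn1, show n - 1 + 2 = n + 1 from by omega, mul_assoc]

/-- for any map `A : U → G` (`U ⊆ Q × Q`) with curvature
`B_A(q₀,q₁,q₂) := A(q₀,q₂)⁻¹ · A(q₁,q₂) · A(q₀,q₁)`, every `N ≥ 2` and every
sequence `q₀,…,q_N` with `(q₀,q_k,q_{k+1}) ∈ U⁽³⁾` for `k = 1,…,N−1`, one has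
`(∏_{k=1}^{N} A(q_{k-1},q_k)⁻¹) · A(q₀,q_N) = ∏_{k=1}^{N−1} B_A(q₀,q_k,q_{k+1})⁻¹`
(ordered products). -/
theorem product_of_connection_values_and_product_of_curvature_values
    {G : Type*} [Group G] {Q : Type*}
    (U : Set (Q × Q)) (A : Q → Q → G)
    (BA : Q → Q → Q → G)
    (hBA : ∀ q₀ q₁ q₂ : Q, BA q₀ q₁ q₂ = (A q₀ q₂)⁻¹ * A q₁ q₂ * A q₀ q₁)
    (N : ℕ) (hN : 2 ≤ N) (q : ℕ → Q)
    (hq : ∀ k, 1 ≤ k → k ≤ N - 1 →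
      (q 0, q k) ∈ U ∧ (q 0, q (k + 1)) ∈ U ∧ (q k, q (k + 1)) ∈ U) :
    (((List.range N).map (fun k => (A (q k) (q (k + 1)))⁻¹)).prod) * A (q 0) (q N)
      = ((List.range (N - 1)).map
          (fun k => (BA (q 0) (q (k + 1)) (q (k + 2)))⁻¹)).prod := by
  simp only [hBA]
  exact aux_conn_curv A q N (by omega)
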